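/- (Theorem 1, upper bound: adversarial examples imply backdoors.) Let f_W be an L-layer ReLU network with weight matrices W_1, …, W_L, each of operator norm at most 1. Let D and D_edge be finite disjoint sets of inputs in ℝ^{d_0}, and suppose ε-adversarial perturbations exist: for each x ∈ D_edge there is a vector ε(x) with ‖ε(x)‖ ≤ ε. Fix a layer l (1 ≤ l ≤ L), let X_(l) be the matrix whose rows are the (l−1)-th layer activations x^{(l−1)} of all points of D ∪ D_edge under W, assume X_(l) X_(l)ᵀ is invertible, and let ρ_(l) > 0 be the minimum singular value of X_(l) (i.e., ‖X_(l)ᵀ u‖ ≥ ρ_(l) ‖u‖ for all u). Then there exists a matrix W'_l such that the network W' obtained from W by replacing its l-th layer with W'_l satisfies: (i) f_{W'}(x) = f_W(x) for every x ∈ D; (ii) f_{W'}(x) = f_W(x + ε(x)) for every x ∈ D_edge; and (iii) ‖W_l − W'_l‖ ≤ ε √(|D_edge|) / ρ_(l), where ‖·‖ is the operator norm. -/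

import Mathlib

open Matrix

/-- The ReLU function `σ(t) = max(t, 0)`. -/
def relu (t : ℝ) : ℝ := max t 0

/-- Layer activations of a ReLU network with layer dimensions `d` and weight
matrices `W` (the `(l+1)`-st layer has matrix `W l : ℝ^{d (l+1) × d l}`):
`x^{(0)} = x` and `x^{(l+1)} = σ(W_{l+1} x^{(l)})` componentwise. The output of
the `L`-layer network is `layerAct d W L x`. -/
def layerAct (d : ℕ → ℕ) (W : ∀ l : ℕ, Matrix (Fin (d (l + 1))) (Fin (d l)) ℝ) :
    (l : ℕ) → (Fin (d 0) → ℝ) → (Fin (d l) → ℝ)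
  | 0, x => x
  | l + 1, x => fun i => relu (((W l).mulVec (layerAct d W l x)) i)

/-- The Euclidean norm of a real vector. -/
noncomputable def euclNorm {ι : Type*} [Fintype ι] (v : ι → ℝ) : ℝ :=
  Real.sqrt (∑ i, (v i) ^ 2)

/-- The operator norm of a real matrix with respect to Euclidean norms. -/
noncomputable def matOpNorm {m n : Type*} [Fintype m] [Fintype n] [DecidableEq n]
    (M : Matrix m n ℝ) : ℝ :=
  ‖LinearMap.toContinuousLinearMap (Matrix.toEuclideanLin M)‖

open scoped Matrix.Norms.L2Operator

section Aux

variable {ι κ : Type*} [Fintype ι] [Fintype κ]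

lemma euclNorm_eq (v : ι → ℝ) : euclNorm v = ‖(WithLp.equiv 2 (ι → ℝ)).symm v‖ := by
  simp [euclNorm, EuclideanSpace.norm_eq, sq_abs]

lemma euclNorm_nonneg (v : ι → ℝ) : 0 ≤ euclNorm v := Real.sqrt_nonneg _

lemma matOpNorm_eq_l2 [DecidableEq ι] (A : Matrix κ ι ℝ) : matOpNorm A = ‖A‖ := rfl

lemma mulVec_euclNorm_le [DecidableEq ι] (A : Matrix κ ι ℝ) (v : ι → ℝ) :
    euclNorm (A.mulVec v) ≤ matOpNorm A * euclNorm v := by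
  rw [euclNorm_eq, euclNorm_eq, matOpNorm_eq_l2]
  exact A.l2_opNorm_mulVec ((WithLp.equiv 2 (ι → ℝ)).symm v)

lemma matOpNorm_le_of [DecidableEq ι] (A : Matrix κ ι ℝ) {c : ℝ} (hc : 0 ≤ c)
    (h : ∀ v, euclNorm (A.mulVec v) ≤ c * euclNorm v) : matOpNorm A ≤ c := by
  refine ContinuousLinearMap.opNorm_le_bound _ hc fun x => ?_
  have := h ((WithLp.equiv 2 (ι → ℝ)) x)
  rw [euclNorm_eq, euclNorm_eq] at this
  simpa [Matrix.toEuclideanLin_apply] using this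

lemma matOpNorm_transpose [DecidableEq ι] [DecidableEq κ] (A : Matrix κ ι ℝ) :
    matOpNorm Aᵀ = matOpNorm A := by
  have hAT : Aᴴ = Aᵀ := by ext i j; simp
  rw [matOpNorm_eq_l2, matOpNorm_eq_l2, ← Matrix.l2_opNorm_conjTranspose A, hAT]

lemma matOpNorm_neg [DecidableEq ι] (A : Matrix κ ι ℝ) : matOpNorm (-A) = matOpNorm A := by
  rw [matOpNorm_eq_l2, matOpNorm_eq_l2]
  exact norm_neg A

lemma abs_dotProduct_le (v w : ι → ℝ) : |v ⬝ᵥ w| ≤ euclNorm v * euclNorm w := by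
  rw [euclNorm_eq, euclNorm_eq]
  have h := abs_real_inner_le_norm ((WithLp.equiv 2 (ι → ℝ)).symm v)
    ((WithLp.equiv 2 (ι → ℝ)).symm w)
  simpa [PiLp.inner_apply, RCLike.inner_apply, dotProduct,
    mul_comm] using h

lemma euclNorm_sq (v : ι → ℝ) : euclNorm v ^ 2 = v ⬝ᵥ v := by
  rw [euclNorm, Real.sq_sqrt (by positivity)]
  simp [dotProduct, pow_two]

lemma euclNorm_mono {f g : ι → ℝ} (h : ∀ i, |f i| ≤ |g i|) : euclNorm f ≤ euclNorm g := by
  refine Real.sqrt_le_sqrt (Finset.sum_le_sum fun i _ => ?_)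
  rw [← sq_abs (f i), ← sq_abs (g i)]
  exact pow_le_pow_left₀ (abs_nonneg _) (h i) 2

lemma abs_relu_sub (s t : ℝ) : |relu s - relu t| ≤ |s - t| :=
  abs_max_sub_max_le_abs s t 0

end Aux

/-- Each layer map is 1-Lipschitz if the weights have norm at most one. -/
lemma layerAct_lip (d : ℕ → ℕ) (W : ∀ l : ℕ, Matrix (Fin (d (l + 1))) (Fin (d l)) ℝ)
    (l : ℕ) (hW : ∀ j, j < l → matOpNorm (W j) ≤ 1) (x y : Fin (d 0) → ℝ) :
    euclNorm (layerAct d W l x - layerAct d W l y) ≤ euclNorm (x - y) := by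
  induction l with
  | zero => simp [layerAct]
  | succ l ih =>
    have ih' := ih (fun j hj => hW j (hj.trans (Nat.lt_succ_self l)))
    have h1 : euclNorm (layerAct d W (l + 1) x - layerAct d W (l + 1) y)
        ≤ euclNorm ((W l).mulVec (layerAct d W l x - layerAct d W l y)) := by
      rw [Matrix.mulVec_sub]
      refine euclNorm_mono fun i => ?_
      simpa [layerAct] using abs_relu_sub ((W l).mulVec (layerAct d W l x) i)
        ((W l).mulVec (layerAct d W l y) i)
    calc euclNorm (layerAct d W (l + 1) x - layerAct d W (l + 1) y)
        ≤ euclNorm ((W l).mulVec (layerAct d W l x - layerAct d W l y)) := h1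
      _ ≤ matOpNorm (W l) * euclNorm (layerAct d W l x - layerAct d W l y) :=
          mulVec_euclNorm_le _ _
      _ ≤ 1 * euclNorm (layerAct d W l x - layerAct d W l y) := by
          have := euclNorm_nonneg (layerAct d W l x - layerAct d W l y)
          exact mul_le_mul_of_nonneg_right (hW l (Nat.lt_succ_self l)) this
      _ = euclNorm (layerAct d W l x - layerAct d W l y) := one_mul _
      _ ≤ euclNorm (x - y) := ih'

/-- Activations below the modified layer are unchanged. -/
lemma layerAct_update_below (d : ℕ → ℕ) (W : ∀ l : ℕ, Matrix (Fin (d (l + 1))) (Fin (d l)) ℝ)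
    (k : ℕ) (M : Matrix (Fin (d (k + 1))) (Fin (d k)) ℝ) :
    ∀ l, l ≤ k → ∀ x, layerAct d (Function.update W k M) l x = layerAct d W l x := by
  intro l
  induction l with
  | zero => intro _ x; rfl
  | succ l ih =>
    intro hl x
    have hlk : l ≠ k := by omega
    funext i
    show relu ((Function.update W k M l).mulVec
        (layerAct d (Function.update W k M) l x) i) = _
    rw [Function.update_of_ne hlk, ih (by omega) x]
    rfl

/-- If the `(k+1)`-th activations agree, so do all later ones (for networks
agreeing above layer `k`). -/
lemma layerAct_update_above (d : ℕ → ℕ) (W : ∀ l : ℕ, Matrix (Fin (d (l + 1))) (Fin (d l)) ℝ)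
    (k : ℕ) (M : Matrix (Fin (d (k + 1))) (Fin (d k)) ℝ) (x y : Fin (d 0) → ℝ)
    (h : layerAct d (Function.update W k M) (k + 1) x = layerAct d W (k + 1) y) :
    ∀ j, layerAct d (Function.update W k M) (k + 1 + j) x = layerAct d W (k + 1 + j) y := by
  intro j
  induction j with
  | zero => exact h
  | succ j ih =>
    have hne : k + 1 + j ≠ k := by omega
    show layerAct d (Function.update W k M) ((k + 1 + j) + 1) x
        = layerAct d W ((k + 1 + j) + 1) y
    funext i
    show relu ((Function.update W k M (k + 1 + j)).mulVec
        (layerAct d (Function.update W k M) (k + 1 + j) x) i) = _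
    rw [Function.update_of_ne hne, ih]
    rfl

theorem adversarial_examples_imply_backdoors
    (L : ℕ) (hL : 1 ≤ L) (d : ℕ → ℕ)
    (W : ∀ l : ℕ, Matrix (Fin (d (l + 1))) (Fin (d l)) ℝ)
    (hW : ∀ l, l < L → matOpNorm (W l) ≤ 1)
    [DecidableEq (Fin (d 0) → ℝ)]
    (D Dedge : Finset (Fin (d 0) → ℝ)) (hdisj : Disjoint D Dedge)
    (ε : ℝ) (εf : (Fin (d 0) → ℝ) → (Fin (d 0) → ℝ))
    (hε : ∀ x ∈ Dedge, euclNorm (εf x) ≤ ε)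
    (k : ℕ) (hk : k + 1 ≤ L)
    (Xl : Matrix (↥(D ∪ Dedge)) (Fin (d k)) ℝ)
    (hXl : ∀ p : ↥(D ∪ Dedge), Xl p = layerAct d W k p.1)
    (hinv : IsUnit (Xl * Xlᵀ))
    (ρ : ℝ) (hρ : 0 < ρ)
    (hσ : ∀ u : ↥(D ∪ Dedge) → ℝ, ρ * euclNorm u ≤ euclNorm (Xlᵀ.mulVec u)) :
    ∃ M : Matrix (Fin (d (k + 1))) (Fin (d k)) ℝ,
      (∀ x ∈ D, layerAct d (Function.update W k M) L x = layerAct d W L x) ∧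
      (∀ x ∈ Dedge,
        layerAct d (Function.update W k M) L x = layerAct d W L (x + εf x)) ∧
      matOpNorm (W k - M) ≤ ε * Real.sqrt (Dedge.card) / ρ := by
  classical
  rcases Dedge.eq_empty_or_nonempty with hDe | hDe
  · -- trivial case: no edge points, keep the network
    refine ⟨W k, fun x _ => by rw [Function.update_eq_self], fun x hx => by
      simp [hDe] at hx, ?_⟩
    have : W k - W k = -(0 : Matrix (Fin (d (k + 1))) (Fin (d k)) ℝ) := by simp
    rw [this, matOpNorm_neg]
    have h0 : matOpNorm (0 : Matrix (Fin (d (k + 1))) (Fin (d k)) ℝ) = 0 := by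
      rw [matOpNorm_eq_l2]; exact norm_zero
    simp [h0, hDe]
  -- main case
  obtain ⟨x₀, hx₀⟩ := hDe
  have hε0 : 0 ≤ ε := le_trans (euclNorm_nonneg _) (hε x₀ hx₀)
  let tgt : ↥(D ∪ Dedge) → (Fin (d 0) → ℝ) := fun p => if p.1 ∈ Dedge then p.1 + εf p.1 else p.1
  let a : ↥(D ∪ Dedge) → (Fin (d k) → ℝ) := fun p => layerAct d W k p.1
  let b : ↥(D ∪ Dedge) → (Fin (d k) → ℝ) := fun p => layerAct d W k (tgt p)
  let C : Matrix (Fin (d (k + 1))) ↥(D ∪ Dedge) ℝ :=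
    Matrix.of fun i p => (W k).mulVec (b p - a p) i
  let A := Xl * Xlᵀ
  let E := C * A⁻¹ * Xl
  have hdet : IsUnit A.det := (Matrix.isUnit_iff_isUnit_det (Xl * Xlᵀ)).mp hinv
  -- key algebra : E * Xlᵀ = C
  have hEX : E * Xlᵀ = C := by
    have h1 : A⁻¹ * A = 1 := Matrix.nonsing_inv_mul A hdet
    calc E * Xlᵀ = C * (A⁻¹ * A) := by
          simp only [E, A, Matrix.mul_assoc]
      _ = C := by rw [h1, Matrix.mul_one]
  have hEa : ∀ p : ↥(D ∪ Dedge), E.mulVec (a p) = fun i => C i p := by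
    intro p
    funext i
    have h2 : E.mulVec (Xl p) i = (E * Xlᵀ) i p := by
      simp [Matrix.mulVec, Matrix.mul_apply, Matrix.transpose_apply, dotProduct]
    rw [show a p = Xl p from (hXl p).symm, h2, hEX]
  -- the key layer computation
  have hkey : ∀ p : ↥(D ∪ Dedge),
      layerAct d (Function.update W k (W k + E)) (k + 1) p.1
        = layerAct d W (k + 1) (tgt p) := by
    intro p
    funext i
    show relu ((Function.update W k (W k + E) k).mulVec
        (layerAct d (Function.update W k (W k + E)) k p.1) i)
      = relu ((W k).mulVec (layerAct d W k (tgt p)) i)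
    rw [Function.update_self, layerAct_update_below d W k (W k + E) k le_rfl]
    congr 1
    have hvec : (W k + E).mulVec (a p) = (W k).mulVec (b p) := by
      rw [Matrix.add_mulVec, hEa p]
      funext j
      have hC : C j p = (W k).mulVec (b p) j - (W k).mulVec (a p) j := by
        show (W k).mulVec (b p - a p) j = _
        rw [Matrix.mulVec_sub]
        rfl
      simp only [Pi.add_apply, hC]
      ring
    exact congrFun hvec i
  obtain ⟨jL, rfl⟩ : ∃ jL, L = k + 1 + jL := ⟨L - (k + 1), by omega⟩
  refine ⟨W k + E, ?_, ?_, ?_⟩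
  -- agreement on D
  · intro x hx
    have hxS : x ∈ D ∪ Dedge := Finset.mem_union_left _ hx
    have hxe : x ∉ Dedge := Finset.disjoint_left.mp hdisj hx
    have htgt : tgt ⟨x, hxS⟩ = x := by simp [tgt, hxe]
    exact layerAct_update_above d W k (W k + E) x x
      (by rw [hkey ⟨x, hxS⟩, htgt]) jL
  -- agreement on Dedge
  · intro x hx
    have hxS : x ∈ D ∪ Dedge := Finset.mem_union_right _ hx
    have htgt : tgt ⟨x, hxS⟩ = x + εf x := by simp [tgt, hx]
    exact layerAct_update_above d W k (W k + E) x (x + εf x)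
      (by rw [hkey ⟨x, hxS⟩, htgt]) jL
  -- the norm bound
  · -- column estimates
    have hCzero : ∀ p : ↥(D ∪ Dedge), p.1 ∉ Dedge →
        (fun i => C i p) = (0 : Fin (d (k + 1)) → ℝ) := by
      intro p hp
      have hba : b p = a p := by simp [b, a, tgt, hp]
      funext i
      show (W k).mulVec (b p - a p) i = 0
      rw [hba, sub_self, Matrix.mulVec_zero]
      rfl
    have hCcol : ∀ p : ↥(D ∪ Dedge), p.1 ∈ Dedge →
        euclNorm (fun i => C i p) ≤ ε := by
      intro p hp
      have h1 : (fun i => C i p) = (W k).mulVec (b p - a p) := rfl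
      have htgt : tgt p - p.1 = εf p.1 := by
        simp [tgt, hp]
      rw [h1]
      calc euclNorm ((W k).mulVec (b p - a p))
          ≤ matOpNorm (W k) * euclNorm (b p - a p) := mulVec_euclNorm_le _ _
        _ ≤ 1 * euclNorm (b p - a p) :=
            mul_le_mul_of_nonneg_right (hW k (by omega)) (euclNorm_nonneg _)
        _ = euclNorm (layerAct d W k (tgt p) - layerAct d W k p.1) := one_mul _
        _ ≤ euclNorm (tgt p - p.1) :=
            layerAct_lip d W k (fun j hj => hW j (by omega)) _ _
        _ ≤ ε := by rw [htgt]; exact hε p.1 hp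
    -- transpose of C is bounded
    have hCt : ∀ u, euclNorm (Cᵀ.mulVec u)
        ≤ ε * Real.sqrt (Dedge.card : ℝ) * euclNorm u := by
      intro u
      have hterm : ∀ p : ↥(D ∪ Dedge), (Cᵀ.mulVec u p) ^ 2
          ≤ (if p.1 ∈ Dedge then (ε * euclNorm u) ^ 2 else 0) := by
        intro p
        have hdp : Cᵀ.mulVec u p = (fun i => C i p) ⬝ᵥ u := by
          simp [Matrix.mulVec, Matrix.transpose_apply, dotProduct]
        by_cases hp : p.1 ∈ Dedge
        · simp only [hp, if_true]
          have h1 : |(fun i => C i p) ⬝ᵥ u| ≤ ε * euclNorm u :=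
            (abs_dotProduct_le _ _).trans
              (mul_le_mul_of_nonneg_right (hCcol p hp) (euclNorm_nonneg u))
          calc (Cᵀ.mulVec u p) ^ 2 = |(fun i => C i p) ⬝ᵥ u| ^ 2 := by
                rw [hdp, sq_abs]
            _ ≤ (ε * euclNorm u) ^ 2 := pow_le_pow_left₀ (abs_nonneg _) h1 2
        · simp only [hp, if_false]
          rw [hdp, hCzero p hp]
          simp
      have hcard : ((Finset.univ.filter
          (fun p : ↥(D ∪ Dedge) => p.1 ∈ Dedge)).card : ℝ) ≤ (Dedge.card : ℝ) := by
        have := Finset.card_le_card_of_injOn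
          (s := Finset.univ.filter (fun p : ↥(D ∪ Dedge) => p.1 ∈ Dedge))
          (t := Dedge) (fun p : ↥(D ∪ Dedge) => p.1)
          (fun p hp => by simpa using (Finset.mem_filter.mp hp).2)
          (fun p _ q _ h => Subtype.ext h)
        exact_mod_cast this
      have hsum : ∑ p, (Cᵀ.mulVec u p) ^ 2
          ≤ (Dedge.card : ℝ) * (ε * euclNorm u) ^ 2 := by
        calc ∑ p, (Cᵀ.mulVec u p) ^ 2
            ≤ ∑ p : ↥(D ∪ Dedge), (if p.1 ∈ Dedge then (ε * euclNorm u) ^ 2 else 0) :=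
              Finset.sum_le_sum fun p _ => hterm p
          _ = ((Finset.univ.filter (fun p : ↥(D ∪ Dedge) => p.1 ∈ Dedge)).card : ℝ)
                * (ε * euclNorm u) ^ 2 := by
              rw [← Finset.sum_filter, Finset.sum_const, nsmul_eq_mul]
          _ ≤ (Dedge.card : ℝ) * (ε * euclNorm u) ^ 2 :=
              mul_le_mul_of_nonneg_right hcard (sq_nonneg _)
      have h2 : euclNorm (Cᵀ.mulVec u)
          ≤ Real.sqrt ((Dedge.card : ℝ) * (ε * euclNorm u) ^ 2) :=
        Real.sqrt_le_sqrt hsum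
      calc euclNorm (Cᵀ.mulVec u)
          ≤ Real.sqrt ((Dedge.card : ℝ) * (ε * euclNorm u) ^ 2) := h2
        _ = Real.sqrt (Dedge.card : ℝ) * (ε * euclNorm u) := by
            rw [Real.sqrt_mul (Nat.cast_nonneg _),
              Real.sqrt_sq (mul_nonneg hε0 (euclNorm_nonneg u))]
        _ = ε * Real.sqrt (Dedge.card : ℝ) * euclNorm u := by ring
    -- the pseudoinverse factor is bounded by 1/ρ
    have hG : ∀ z : ↥(D ∪ Dedge) → ℝ,
        euclNorm (Xlᵀ.mulVec ((Xl * Xlᵀ)⁻¹.mulVec z)) ≤ euclNorm z / ρ := by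
      intro z
      set w := (Xl * Xlᵀ)⁻¹.mulVec z with hw
      have hAz : Xl.mulVec (Xlᵀ.mulVec w) = z := by
        rw [Matrix.mulVec_mulVec, hw, Matrix.mulVec_mulVec,
          Matrix.mul_nonsing_inv _ hdet, Matrix.one_mulVec]
      have ht : euclNorm (Xlᵀ.mulVec w) ^ 2 = w ⬝ᵥ z := by
        rw [euclNorm_sq]
        calc (Xlᵀ *ᵥ w) ⬝ᵥ (Xlᵀ *ᵥ w) = (w ᵥ* Xl) ⬝ᵥ (Xlᵀ *ᵥ w) := by
              rw [Matrix.mulVec_transpose]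
          _ = w ⬝ᵥ (Xl *ᵥ (Xlᵀ *ᵥ w)) := (Matrix.dotProduct_mulVec w Xl _).symm
          _ = w ⬝ᵥ z := by rw [hAz]
      set t := euclNorm (Xlᵀ.mulVec w) with htdef
      have ht0 : 0 ≤ t := euclNorm_nonneg _
      have hcs : w ⬝ᵥ z ≤ euclNorm w * euclNorm z :=
        (le_abs_self _).trans (abs_dotProduct_le w z)
      have hσw : ρ * euclNorm w ≤ t := hσ w
      have h5 : ρ * t ^ 2 ≤ t * euclNorm z := by
        calc ρ * t ^ 2 = ρ * (w ⬝ᵥ z) := by rw [ht]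
          _ ≤ ρ * (euclNorm w * euclNorm z) :=
              mul_le_mul_of_nonneg_left hcs hρ.le
          _ = (ρ * euclNorm w) * euclNorm z := by ring
          _ ≤ t * euclNorm z :=
              mul_le_mul_of_nonneg_right hσw (euclNorm_nonneg z)
      rcases eq_or_lt_of_le ht0 with h | h
      · rw [← h]
        exact div_nonneg (euclNorm_nonneg z) hρ.le
      · rw [le_div_iff₀ hρ]
        nlinarith [h5, h]
    -- combine
    have hbound : ∀ u, euclNorm (Eᵀ.mulVec u)
        ≤ (ε * Real.sqrt (Dedge.card : ℝ) / ρ) * euclNorm u := by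
      intro u
      have hsymm : (Xl * Xlᵀ)ᵀ = Xl * Xlᵀ := by
        rw [Matrix.transpose_mul, Matrix.transpose_transpose]
      have h1 : Eᵀ = Xlᵀ * ((Xl * Xlᵀ)⁻¹ * Cᵀ) := by
        show (C * (Xl * Xlᵀ)⁻¹ * Xl)ᵀ = _
        rw [Matrix.transpose_mul, Matrix.transpose_mul,
          Matrix.transpose_nonsing_inv, hsymm]
      have hET : Eᵀ.mulVec u = Xlᵀ.mulVec ((Xl * Xlᵀ)⁻¹.mulVec (Cᵀ.mulVec u)) := by
        rw [h1, Matrix.mulVec_mulVec, Matrix.mulVec_mulVec, Matrix.mul_assoc]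
      rw [hET]
      calc euclNorm (Xlᵀ.mulVec ((Xl * Xlᵀ)⁻¹.mulVec (Cᵀ.mulVec u)))
          ≤ euclNorm (Cᵀ.mulVec u) / ρ := hG _
        _ ≤ ε * Real.sqrt (Dedge.card : ℝ) * euclNorm u / ρ :=
            by gcongr; exact hCt u
        _ = (ε * Real.sqrt (Dedge.card : ℝ) / ρ) * euclNorm u := by ring
    have hWM : W k - (W k + E) = -E := by
      abel
    rw [hWM, matOpNorm_neg, ← matOpNorm_transpose E]
    exact matOpNorm_le_of _
      (div_nonneg (mul_nonneg hε0 (Real.sqrt_nonneg _)) hρ.le) hbound
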